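/- For all natural numbers a, c, d, m, p, we have ∑_{k=0}^{a} C(a,k)·C(c+d−a, p+k)·C(k,c)·C(m+k,d) = C(m−p, d−a−p)·C(m+c, a+p)·C(a,c). -/

import Mathlib

/-- Binomial coefficient for integers: `C x y` is the usual binomial coefficient
when `0 ≤ y ≤ x`, and `0` otherwise. -/
def C (x y : ℤ) : ℤ := if 0 ≤ y ∧ y ≤ x then (x.toNat.choose y.toNat : ℤ) else 0

lemma C_neg {x y : ℤ} (h : y < 0) : C x y = 0 := by
  unfold C; rw [if_neg]; omega

lemma C_gt {x y : ℤ} (h : x < y) : C x y = 0 := by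
  unfold C; rw [if_neg]; omega

lemma C_nat (n k : ℕ) : C n k = (n.choose k : ℤ) := by
  unfold C
  split
  · simp
  · next h =>
    have : n < k := by omega
    rw [Nat.choose_eq_zero_of_lt this]; simp

lemma C_symm (x y : ℤ) : C x y = C x (x - y) := by
  unfold C
  rcases le_or_gt 0 y with hy | hy
  · rcases le_or_gt y x with hx | hx
    · rw [if_pos ⟨hy, hx⟩, if_pos ⟨by omega, by omega⟩]
      have hx0 : 0 ≤ x := le_trans hy hx
      congr 1
      rw [show (x - y).toNat = x.toNat - y.toNat by omega,
        Nat.choose_symm (by omega : y.toNat ≤ x.toNat)]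
    · rw [if_neg (by omega), if_neg (by omega)]
  · rw [if_neg (by omega), if_neg (by omega)]

lemma C_mul (n k j : ℤ) : C n k * C k j = C n j * C (n - j) (k - j) := by
  by_cases hj : 0 ≤ j
  · by_cases hjk : j ≤ k
    · by_cases hkn : k ≤ n
      · unfold C
        rw [if_pos ⟨by omega, hkn⟩, if_pos ⟨hj, hjk⟩, if_pos ⟨hj, by omega⟩,
          if_pos ⟨by omega, by omega⟩]
        have := Nat.choose_mul (n := n.toNat) (show j.toNat ≤ k.toNat by omega)
        rw [show (n - j).toNat = n.toNat - j.toNat by omega,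
          show (k - j).toNat = k.toNat - j.toNat by omega,
          ← Nat.cast_mul, ← Nat.cast_mul, this]
      · rw [C_gt (by omega : n < k), C_gt (by omega : n - j < k - j), zero_mul, mul_zero]
    · rw [C_gt (by omega : k < j), C_neg (by omega : k - j < 0), mul_zero, mul_zero]
  · rw [C_neg (by omega : j < 0), C_neg (by omega : j < 0), mul_zero, zero_mul]

lemma C_pascal (A : ℕ) (y : ℤ) : C (A + 1) y = C A y + C A (y - 1) := by
  by_cases hy : 0 ≤ y
  · by_cases hyA : y ≤ A
    · by_cases hy0 : y = 0
      · subst hy0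
        rw [C_neg (by omega : (0:ℤ) - 1 < 0)]
        unfold C
        rw [if_pos ⟨le_refl 0, by positivity⟩, if_pos ⟨le_refl 0, by positivity⟩]
        simp
      · unfold C
        rw [if_pos ⟨hy, by omega⟩, if_pos ⟨hy, by omega⟩, if_pos ⟨by omega, by omega⟩]
        have h1 : ((A:ℤ)+1).toNat = A + 1 := by omega
        have h2 : (y - 1).toNat = y.toNat - 1 := by omega
        have h3 : y.toNat = (y.toNat - 1) + 1 := by omega
        rw [h1, h2, show (A:ℤ).toNat = A by omega]
        have h4 : (y.toNat - 1).succ = y.toNat := by omega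
        rw [h3, Nat.choose_succ_succ, h4, ← h3]
        push_cast
        ring
    · by_cases hyA1 : y ≤ (A:ℤ) + 1
      · have : y = (A:ℤ) + 1 := by omega
        subst this
        rw [C_gt (by omega : (A:ℤ) < A + 1)]
        unfold C
        rw [if_pos ⟨hy, le_refl _⟩, if_pos ⟨by omega, by omega⟩]
        rw [show ((A:ℤ)+1).toNat = A + 1 by omega, show ((A:ℤ)+1-1).toNat = A by omega,
          show (A:ℤ).toNat = A by omega]
        simp
      · rw [C_gt (by omega : (A:ℤ) + 1 < y), C_gt (by omega : (A:ℤ) < y),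
          C_gt (by omega : (A:ℤ) < y - 1)]
        ring
  · rw [C_neg (by omega : y < 0), C_neg (by omega : y < 0), C_neg (by omega : y - 1 < 0)]
    ring

lemma C_vandermonde (A N : ℕ) (s : ℤ) :
    ∑ t ∈ Finset.range (A + 1), C A t * C N (s - t) = C (A + N) s := by
  induction A generalizing s with
  | zero =>
    simp [C_nat 0 0, C]
  | succ A ih =>
    have step : ∀ t : ℕ, C (A + 1 : ℕ) (t : ℤ) = C A t + C A ((t:ℤ) - 1) := by
      intro t
      have := C_pascal A t
      rwa [show ((A:ℤ) + 1) = ((A+1 : ℕ) : ℤ) by push_cast; ring] at this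
    calc ∑ t ∈ Finset.range (A + 1 + 1), C (A+1:ℕ) t * C N (s - t)
        = ∑ t ∈ Finset.range (A + 1 + 1), (C A t * C N (s - t) + C A ((t:ℤ)-1) * C N (s - t)) := by
          refine Finset.sum_congr rfl fun t _ => ?_
          rw [step t]; ring
      _ = (∑ t ∈ Finset.range (A + 1 + 1), C A t * C N (s - t))
          + ∑ t ∈ Finset.range (A + 1 + 1), C A ((t:ℤ)-1) * C N (s - t) := by
          rw [Finset.sum_add_distrib]
      _ = C (A + N) s + C (A + N) (s - 1) := by
          congr 1
          · rw [Finset.sum_range_succ, C_gt (by exact_mod_cast Nat.lt_succ_self A), zero_mul,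
              add_zero, ih]
          · rw [Finset.sum_range_succ']
            rw [C_neg (by norm_num : ((0:ℕ):ℤ) - 1 < 0), zero_mul, add_zero]
            rw [Finset.sum_congr rfl (fun i (_ : i ∈ Finset.range (A+1)) => by
              rw [show (((i+1:ℕ):ℤ) - 1) = (i:ℤ) by push_cast; ring,
                show (s - ((i+1:ℕ):ℤ)) = (s - 1) - (i:ℤ) by push_cast; ring])]
            exact ih (s - 1)
      _ = C (A + 1 + N : ℕ) s := by
          have h := C_pascal (A + N) s
          push_cast at h ⊢
          rw [show ((A:ℤ)+1+N) = (A:ℤ)+N+1 by ring]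
          exact h.symm

lemma C_vandermonde' (A B N : ℕ) (h : A ≤ B) (s : ℤ) :
    ∑ t ∈ Finset.range (B + 1), C A t * C N (s - t) = C (A + N) s := by
  rw [← C_vandermonde A N s]
  symm
  apply Finset.sum_subset (Finset.range_subset_range.mpr (by omega))
  intro t _ ht
  rw [C_gt (by exact_mod_cast (by simp at ht; omega : A < t)), zero_mul]

lemma sum_shift (f : ℕ → ℤ) (c a : ℕ) (h : c ≤ a) (h0 : ∀ k < c, f k = 0) :
    ∑ k ∈ Finset.range (a + 1), f k = ∑ j ∈ Finset.range (a - c + 1), f (c + j) := by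
  rw [show a - c + 1 = a + 1 - c by omega, ← Finset.sum_Ico_eq_sum_range]
  rw [Finset.range_eq_Ico, ← Finset.sum_Ico_consecutive _ (Nat.zero_le c) (by omega : c ≤ a + 1)]
  rw [Finset.sum_eq_zero (fun k hk => h0 k (Finset.mem_Ico.mp hk).2), zero_add]


theorem stmt_10 (a c d m p : ℕ) :
    ∑ k ∈ Finset.range (a + 1), C a k * C ((c : ℤ) + d - a) ((p : ℤ) + k) * C k c * C ((m : ℤ) + k) d = C ((m : ℤ) - p) ((d : ℤ) - a - p) * C ((m : ℤ) + c) ((a : ℤ) + p) * C a c := by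
  by_cases hc : c ≤ a
  swap
  · rw [C_gt (x := (a:ℤ)) (y := (c:ℤ)) (by exact_mod_cast (by omega : a < c)), mul_zero]
    apply Finset.sum_eq_zero
    intro k hk
    have hk' : k < c := by simp at hk; omega
    rw [C_gt (x := (k:ℤ)) (y := (c:ℤ)) (by exact_mod_cast hk')]
    ring
  by_cases hd : a ≤ c + d
  swap
  · rw [C_neg (x := (m:ℤ) - p) (y := (d:ℤ) - a - p) (by omega), zero_mul, zero_mul]
    apply Finset.sum_eq_zero
    intro k _
    rw [C_gt (x := (c:ℤ) + d - a) (y := (p:ℤ) + k) (by omega)]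
    ring
  set e := a - c with he
  set N := c + d - a with hN
  have hE : ((e:ℕ):ℤ) = (a:ℤ) - c := by omega
  have hNc : ((N:ℕ):ℤ) = (c:ℤ) + d - a := by omega
  -- Step 1: pull out C a c and shift index by c
  have step1 : ∑ k ∈ Finset.range (a + 1),
        C a k * C ((c : ℤ) + d - a) ((p : ℤ) + k) * C k c * C ((m : ℤ) + k) d
      = C a c * ∑ j ∈ Finset.range (e + 1),
          C e j * C N ((p:ℤ) + c + j) * C ((m:ℤ) + c + j) d := by
    have h1 : ∀ k : ℕ, C a k * C ((c : ℤ) + d - a) ((p : ℤ) + k) * C k c * C ((m : ℤ) + k) d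
        = C a c * (C e ((k:ℤ) - c) * C N ((p:ℤ) + k) * C ((m:ℤ) + k) d) := by
      intro k
      have h2 : C (a:ℤ) k * C (k:ℤ) c = C (a:ℤ) c * C ((e:ℕ):ℤ) ((k:ℤ) - c) := by
        rw [C_mul, hE]
      rw [show ((c:ℤ) + d - a) = ((N:ℕ):ℤ) from hNc.symm]
      linear_combination (C ((N:ℕ):ℤ) ((p:ℤ) + k) * C ((m:ℤ) + k) (d:ℤ)) * h2
    rw [Finset.sum_congr rfl (fun k _ => h1 k), ← Finset.mul_sum]
    congr 1
    have shift := sum_shift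
      (fun k => C ((e:ℕ):ℤ) ((k:ℤ) - c) * C ((N:ℕ):ℤ) ((p:ℤ) + k) * C ((m:ℤ) + k) (d:ℤ))
      c a hc (fun k hk => by
        rw [C_neg (x := ((e:ℕ):ℤ)) (y := (k:ℤ) - c) (by omega), zero_mul, zero_mul])
    rw [shift]
    refine Finset.sum_congr rfl fun j _ => ?_
    beta_reduce
    rw [show (((c + j : ℕ)):ℤ) - c = (j:ℤ) by push_cast; ring,
        show ((p:ℤ) + ((c + j : ℕ):ℤ)) = (p:ℤ) + c + j by push_cast; ring,
        show ((m:ℤ) + ((c + j : ℕ):ℤ)) = (m:ℤ) + c + j by push_cast; ring]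
  rw [step1]
  -- Step 2: expand C (m+c+j) d by Vandermonde and swap sums
  have step2 : ∑ j ∈ Finset.range (e + 1),
        C e j * C N ((p:ℤ) + c + j) * C ((m:ℤ) + c + j) d
      = ∑ i ∈ Finset.range (e + 1), ∑ j ∈ Finset.range (e + 1),
          C e j * C N ((p:ℤ) + c + j) * (C j i * C ((m + c : ℕ):ℤ) ((d:ℤ) - i)) := by
    rw [Finset.sum_comm]
    refine Finset.sum_congr rfl fun j hj => ?_
    have hj' : j ≤ e := by simp at hj; omega
    have hv := C_vandermonde' j e (m + c) hj' (d:ℤ)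
    rw [show ((m:ℤ) + c + j) = ((j:ℤ) + ((m + c : ℕ):ℤ)) by push_cast; ring, ← hv,
      Finset.mul_sum]
  rw [step2]
  -- Step 3: inner sum over j collapses by Vandermonde
  have step3 : ∀ i ∈ Finset.range (e + 1),
      ∑ j ∈ Finset.range (e + 1),
          C e j * C N ((p:ℤ) + c + j) * (C j i * C ((m + c : ℕ):ℤ) ((d:ℤ) - i))
        = C ((m + c : ℕ):ℤ) ((d:ℤ) - i) * C e i * C (((e - i : ℕ):ℤ) + ((N:ℕ):ℤ)) ((N:ℤ) - p - c - i) := by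
    intro i hi
    have hi' : i ≤ e := by simp at hi; omega
    have hEi : ((e:ℤ) - i) = (((e - i : ℕ)):ℤ) := by omega
    have h1 : ∀ j : ℕ, C e j * C N ((p:ℤ) + c + j) * (C j i * C ((m + c : ℕ):ℤ) ((d:ℤ) - i))
        = C ((m + c : ℕ):ℤ) ((d:ℤ) - i) * C e i *
          (C ((e - i : ℕ):ℤ) ((j:ℤ) - i) * C ((N:ℕ):ℤ) ((p:ℤ) + c + j)) := by
      intro j
      have h2 : C ((e:ℕ):ℤ) j * C (j:ℤ) i = C ((e:ℕ):ℤ) i * C ((e - i : ℕ):ℤ) ((j:ℤ) - i) := by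
        rw [C_mul, hEi]
      linear_combination (C ((m + c : ℕ):ℤ) ((d:ℤ) - i) * C ((N:ℕ):ℤ) ((p:ℤ) + c + j)) * h2
    rw [Finset.sum_congr rfl (fun j _ => h1 j), ← Finset.mul_sum]
    congr 1
    have shift := sum_shift
      (fun j => C ((e - i : ℕ):ℤ) ((j:ℤ) - i) * C ((N:ℕ):ℤ) ((p:ℤ) + c + j))
      i e hi' (fun j hj => by
        rw [C_neg (x := ((e - i : ℕ):ℤ)) (y := (j:ℤ) - i) (by omega), zero_mul])
    rw [shift]
    have hcongr : ∀ t ∈ Finset.range (e - i + 1),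
        C ((e - i : ℕ):ℤ) (((i + t : ℕ):ℤ) - i) * C ((N:ℕ):ℤ) ((p:ℤ) + c + ((i + t : ℕ):ℤ))
        = C ((e - i : ℕ):ℤ) (t:ℤ) * C ((N:ℕ):ℤ) (((N:ℤ) - p - c - i) - t) := by
      intro t _
      rw [show (((i + t : ℕ)):ℤ) - i = (t:ℤ) by push_cast; ring]
      congr 1
      rw [C_symm ((N:ℕ):ℤ) ((p:ℤ) + c + ((i + t : ℕ):ℤ))]
      congr 1
      push_cast
      ring
    rw [Finset.sum_congr rfl hcongr, C_vandermonde (e - i) N ((N:ℤ) - p - c - i)]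
  rw [Finset.sum_congr rfl step3]
  -- Step 4: factor out C (m+c) (a+p)
  have step4 : ∀ i ∈ Finset.range (e + 1),
      C ((m + c : ℕ):ℤ) ((d:ℤ) - i) * C e i * C (((e - i : ℕ):ℤ) + ((N:ℕ):ℤ)) ((N:ℤ) - p - c - i)
      = C ((m:ℤ) + c) ((a:ℤ) + p) *
          (C e i * C (((m:ℤ) + c) - ((a:ℤ) + p)) (((d:ℤ) - a - p) - i)) := by
    intro i hi
    have hi' : i ≤ e := by simp at hi; omega
    have h4 : C (((e - i : ℕ):ℤ) + ((N:ℕ):ℤ)) ((N:ℤ) - p - c - i) = C ((d:ℤ) - i) ((a:ℤ) + p) := by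
      rw [show (((e - i : ℕ)):ℤ) + ((N:ℕ):ℤ) = (d:ℤ) - i by omega, C_symm]
      congr 1
      omega
    rw [h4, show ((m + c : ℕ):ℤ) = (m:ℤ) + c by push_cast; ring]
    have h5 := C_mul ((m:ℤ) + c) ((d:ℤ) - i) ((a:ℤ) + p)
    rw [show ((d:ℤ) - i) - ((a:ℤ) + p) = ((d:ℤ) - a - p) - i from by ring] at h5
    linear_combination C ((e:ℕ):ℤ) (i:ℤ) * h5
  rw [Finset.sum_congr rfl step4, ← Finset.mul_sum]
  by_cases hm : a + p ≤ m + c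
  · have hM : ((m:ℤ) + c) - ((a:ℤ) + p) = (((m + c - a - p : ℕ)):ℤ) := by omega
    rw [hM, C_vandermonde e (m + c - a - p) ((d:ℤ) - a - p),
      show ((e:ℤ) + ((m + c - a - p : ℕ):ℤ)) = (m:ℤ) - p by omega]
    ring
  · rw [C_gt (x := (m:ℤ) + c) (y := (a:ℤ) + p) (by omega)]
    ring
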